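/- Under class-balanced sampling and collapsed representations (all support representations equal a common vector z, which also equals the anchor representation), the soft nearest neighbours prediction p = π_d(z, S) equals the uniform distribution over the K represented classes; hence if the target p⁺ is not the uniform distribution, then p ≠ p⁺. -/

import Mathlib

/-- Proposition 1, non-collapsing representations: under
class-balanced sampling and collapsed representations, the soft nearest
neighbours prediction equals the uniform distribution over the `K` classes;
hence if the target `p⁺` is not uniform, then `p ≠ p⁺`. -/
theorem paws_stmt_2 (D n K : ℕ) (hK : 0 < K) (hn : 0 < n) (hdvd : K ∣ n)
    (d : (Fin D → ℝ) → (Fin D → ℝ) → ℝ)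
    (hd : ∀ a b, 0 < d a b)
    (z : Fin D → ℝ) (zs : Fin n → (Fin D → ℝ))
    (hz : ∀ j, zs j = z)
    (y : Fin n → Fin K → ℝ)
    (hy : ∀ j, ∃ c : Fin K, y j = Pi.single c 1)
    (hbal : ∀ c : Fin K,
      (Finset.univ.filter (fun j : Fin n => y j = Pi.single c 1)).card = n / K)
    (p : Fin K → ℝ)
    (hp : p = fun k => ∑ j : Fin n, (d z (zs j) / ∑ j' : Fin n, d z (zs j')) * y j k)
    (pplus : Fin K → ℝ)
    (hpplus : pplus ≠ fun _ : Fin K => 1 / (K : ℝ)) :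
    (p = fun _ : Fin K => 1 / (K : ℝ)) ∧ p ≠ pplus := by
  obtain ⟨m, hm⟩ := hdvd
  have hmpos : 0 < m := by
    rcases Nat.eq_zero_or_pos m with h | h
    · subst h; simp [hm] at hn
    · exact h
  have hnK : n / K = m := by rw [hm, Nat.mul_div_cancel_left _ hK]
  have hsum : (∑ j' : Fin n, d z (zs j')) = n * d z z := by
    rw [Finset.sum_congr rfl (fun j _ => by rw [hz j])]
    simp [Finset.card_univ, mul_comm]
  have hdz : (0:ℝ) < d z z := hd z z
  have hne : (n : ℝ) ≠ 0 := Nat.cast_ne_zero.mpr hn.ne'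
  have hkey : p = fun _ : Fin K => 1 / (K : ℝ) := by
    rw [hp]
    funext k
    have hcoef : ∀ j : Fin n,
        (d z (zs j) / ∑ j' : Fin n, d z (zs j')) * y j k = (1 / n) * y j k := by
      intro j
      rw [hz j, hsum]
      rw [mul_comm]
      field_simp
    rw [Finset.sum_congr rfl (fun j _ => hcoef j), ← Finset.mul_sum]
    have hyval : ∀ j : Fin n,
        y j k = if y j = Pi.single k 1 then (1:ℝ) else 0 := by
      intro j
      obtain ⟨c, hc⟩ := hy j
      by_cases h : y j = Pi.single k 1
      · simp [h]
      · rw [if_neg h, hc]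
        have hck : c ≠ k := by rintro rfl; exact h hc
        exact Pi.single_eq_of_ne (Ne.symm hck) 1
    rw [Finset.sum_congr rfl (fun j _ => hyval j), Finset.sum_boole]
    rw [hbal k, hnK]
    have : (n : ℝ) = K * m := by rw [hm]; push_cast; ring
    rw [this]
    have hKne : (K:ℝ) ≠ 0 := Nat.cast_ne_zero.mpr hK.ne'
    have hmne : (m:ℝ) ≠ 0 := Nat.cast_ne_zero.mpr hmpos.ne'
    field_simp
  refine ⟨hkey, ?_⟩
  rw [hkey]
  exact fun h => hpplus h.symm
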